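/- arXiv:2303.15032 — 3 statements merged into one kernel-verified Lean document; each statement's English description precedes it below -/
import Mathlib

section
/- Let m, t ≥ 2 be integers and n = mt − 1. Then depth(S/J_{n,m}^s) = 0 for all integers s ≥ t. -/
open MvPolynomial

/-- The `m`-path ideal of the cycle graph of length `n`, as an ideal of
`S = K[x_0, …, x_{n-1}]` (variables indexed by `ZMod n`): it is generated by the
`n` monomials `x_i x_{i+1} ⋯ x_{i+m-1}`, indices taken modulo `n`. -/
noncomputable def cyclePathIdeal (K : Type*) [Field K] (n m : ℕ) :
    Ideal (MvPolynomial (ZMod n) K) :=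
  Ideal.span { p | ∃ i : ZMod n, p = ∏ j ∈ Finset.range m, X (i + (j : ZMod n)) }

/-- The maximal graded ideal `(x_0, …, x_{n-1})` of `K[x_i : i ∈ σ]`. -/
noncomputable def maxIdeal (K : Type*) [Field K] (σ : Type*) :
    Ideal (MvPolynomial σ K) :=
  Ideal.span (Set.range (X : σ → MvPolynomial σ K))

/-- The depth of `S/I` with respect to the maximal graded ideal `(x_0, …, x_{n-1})`:
the maximal length of an `S/I`-regular sequence of elements of the maximal graded ideal. -/
noncomputable def quotDepth {K : Type*} [Field K] {σ : Type*}
    (I : Ideal (MvPolynomial σ K)) : ℕ :=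
  sSup { k : ℕ | ∃ rs : List (MvPolynomial σ K), rs.length = k ∧
    (∀ r ∈ rs, r ∈ maxIdeal K σ) ∧
    RingTheory.Sequence.IsRegular (MvPolynomial σ K ⧸ I) rs }

section Aux

variable {K : Type*} [Field K] {n m : ℕ}

lemma aux_double_prod (t : ℕ) (i : ZMod n) :
    ∏ k ∈ Finset.range t, ∏ j ∈ Finset.range m,
        (X (i + (k * m : ℕ) + (j : ZMod n)) : MvPolynomial (ZMod n) K)
      = ∏ l ∈ Finset.range (t * m), X (i + (l : ZMod n)) := by
  induction t with
  | zero => simp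
  | succ t ih =>
    rw [Finset.prod_range_succ, ih, Nat.succ_mul, Finset.prod_range_add]
    congr 1
    refine Finset.prod_congr rfl fun j hj => ?_
    congr 1
    push_cast
    ring

lemma aux_prod_univ [NeZero n] (i : ZMod n) :
    ∏ l ∈ Finset.range n, (X (i + (l : ZMod n)) : MvPolynomial (ZMod n) K)
      = ∏ a : ZMod n, X a := by
  have h1 : ∏ a : ZMod n, (X a : MvPolynomial (ZMod n) K) = ∏ a : ZMod n, X (i + a) :=
    (Fintype.prod_equiv (Equiv.addLeft i) _ _ (fun a => rfl)).symm
  rw [h1]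
  refine Finset.prod_nbij' (fun l => (l : ZMod n)) (fun a => a.val) ?_ ?_ ?_ ?_ ?_
  · intro l hl; exact Finset.mem_univ _
  · intro a _; exact Finset.mem_range.mpr (ZMod.val_lt a)
  · intro l hl; exact ZMod.val_natCast_of_lt (Finset.mem_range.mp hl)
  · intro a _; simp [ZMod.natCast_val, ZMod.cast_id]
  · intro l hl; rfl

lemma aux_prod_mem_pow (J : Ideal (MvPolynomial (ZMod n) K)) (t : ℕ)
    (f : ℕ → MvPolynomial (ZMod n) K) (hf : ∀ k, f k ∈ J) :
    ∏ k ∈ Finset.range t, f k ∈ J ^ t := by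
  induction t with
  | zero => simp
  | succ t ih =>
    rw [Finset.prod_range_succ, pow_succ]
    exact Ideal.mul_mem_mul ih (hf t)

lemma aux_pow_le_comap (s : ℕ) :
    (cyclePathIdeal K n m) ^ s ≤ Ideal.comap
      (aeval (fun _ : ZMod n => (Polynomial.X : Polynomial K))).toRingHom
      (Ideal.span {Polynomial.X ^ m} ^ s) := by
  refine le_trans (Ideal.pow_right_mono ?_ s) (Ideal.le_comap_pow _ s)
  rw [cyclePathIdeal, Ideal.span_le]
  rintro p ⟨i, rfl⟩
  simp only [SetLike.mem_coe, Ideal.mem_comap, AlgHom.toRingHom_eq_coe, RingHom.coe_coe,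
    map_prod, aeval_X, Finset.prod_const, Finset.card_range]
  exact Ideal.subset_span rfl

lemma sSupZero {A : Set ℕ} (h : ∀ k ∈ A, k = 0) : sSup A = 0 := by
  rcases A.eq_empty_or_nonempty with rfl | hne
  · simp
  · exact Nat.le_antisymm (csSup_le hne fun k hk => (h k hk).le) (Nat.zero_le _)

end Aux

/-- For `m, t ≥ 2` and `n = mt - 1`, `depth(S/J_{n,m}^s) = 0` for all `s ≥ t`. -/
theorem depth_eq_zero_of_n_eq_mt_sub_one
    (K : Type*) [Field K] (n m t : ℕ) (hm : 2 ≤ m) (ht : 2 ≤ t) (hn : n = m * t - 1)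
    (s : ℕ) (hs : t ≤ s) :
    quotDepth ((cyclePathIdeal K n m) ^ s) = 0 := by
  classical
  have hmt : 4 ≤ m * t := by nlinarith
  have hms : 4 ≤ m * s := le_trans hmt (Nat.mul_le_mul_left m hs)
  have hmts : m * t ≤ m * s := Nat.mul_le_mul_left m hs
  have hn1 : n + 1 = m * t := by omega
  haveI : NeZero n := ⟨by omega⟩
  set S := MvPolynomial (ZMod n) K
  set J := cyclePathIdeal K n m with hJ
  set P : S := ∏ a : ZMod n, X a with hP
  set g : S := ∏ j ∈ Finset.range m, X ((0 : ZMod n) + (j : ZMod n)) with hg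
  have hgJ : g ∈ J := Ideal.subset_span ⟨0, rfl⟩
  set u : S := P * g ^ (s - t) with hu
  -- Key 1 : X i * u ∈ J ^ s for every i
  have key1 : ∀ i : ZMod n, X i * u ∈ J ^ s := by
    intro i
    have hXiP : X i * P = ∏ k ∈ Finset.range t, ∏ j ∈ Finset.range m,
        (X (i + (k * m : ℕ) + (j : ZMod n)) : S) := by
      rw [aux_double_prod, mul_comm t m, ← hn1, Finset.prod_range_succ]
      have : ((n : ℕ) : ZMod n) = 0 := ZMod.natCast_self n
      rw [this, add_zero, aux_prod_univ i, mul_comm]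
    have hmem : X i * P ∈ J ^ t := by
      rw [hXiP]
      exact aux_prod_mem_pow J t _ fun k => Ideal.subset_span ⟨i + ((k * m : ℕ) : ZMod n), rfl⟩
    have : X i * u = (X i * P) * g ^ (s - t) := by ring
    rw [this]
    have h2 : g ^ (s - t) ∈ J ^ (s - t) := Ideal.pow_mem_pow hgJ _
    have := Ideal.mul_mem_mul hmem h2
    rwa [← pow_add, Nat.add_sub_cancel' hs] at this
  -- Key 2 : u ∉ J ^ s
  have key2 : u ∉ J ^ s := by
    intro hcon
    have h1 := aux_pow_le_comap (K := K) (n := n) (m := m) s hcon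
    rw [Ideal.mem_comap] at h1
    have hφu : (aeval (fun _ : ZMod n => (Polynomial.X : Polynomial K))).toRingHom u
        = Polynomial.X ^ (m * s - 1) := by
      simp only [hu, hP, hg, AlgHom.toRingHom_eq_coe, RingHom.coe_coe, map_mul, map_prod,
        map_pow, aeval_X, Finset.prod_const, Finset.card_range, Finset.card_univ, ZMod.card]
      rw [← pow_mul, ← pow_add]
      congr 1
      have hmul : m * (s - t) = m * s - m * t := Nat.mul_sub m s t
      omega
    rw [hφu] at h1
    rw [Ideal.span_singleton_pow, Ideal.mem_span_singleton, ← pow_mul] at h1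
    rw [Polynomial.X_pow_dvd_iff] at h1
    have h2 := h1 (m * s - 1) (by omega)
    simp [Polynomial.coeff_X_pow] at h2
  -- conclude
  unfold quotDepth
  refine sSupZero ?_
  rintro k ⟨rs, hlen, hmem, hreg⟩
  cases rs with
  | nil => exact hlen.symm
  | cons r rest =>
    exfalso
    have hr : IsSMulRegular (S ⧸ J ^ s) r :=
      ((RingTheory.Sequence.isRegular_cons_iff _ _ _).mp hreg).1
    have hru : r * u ∈ J ^ s := by
      have hle : maxIdeal K (ZMod n) * Ideal.span {u} ≤ J ^ s := by
        rw [maxIdeal, Ideal.span_mul_span', Ideal.span_le]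
        rintro p hp
        obtain ⟨x, ⟨i, rfl⟩, y, hy, rfl⟩ := Set.mem_mul.mp hp
        rw [Set.mem_singleton_iff] at hy
        subst hy
        exact key1 i
      exact hle (Ideal.mul_mem_mul (hmem r List.mem_cons_self)
        (Ideal.subset_span rfl))
    have hzero : r • (Ideal.Quotient.mk (J ^ s) u) = r • (0 : S ⧸ J ^ s) := by
      rw [smul_zero, ← Ideal.Quotient.mk_eq_mk, ← Submodule.Quotient.mk_smul, smul_eq_mul,
        Ideal.Quotient.mk_eq_mk, Ideal.Quotient.eq_zero_iff_mem]
      exact hru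
    have := hr hzero
    rw [Ideal.Quotient.eq_zero_iff_mem] at this
    exact key2 this
end

section
/- Suppose d = gcd(n,m) = 1. Then for every 1 ≤ i ≤ n, the monomial x_i · (x_1 x_2 ⋯ x_n)^α belongs to J_{n,m}^{t_0}; in particular the maximal graded ideal (x_1,…,x_n) is contained in the colon ideal (J_{n,m}^{t_0} : (x_1⋯x_n)^α). -/
open MvPolynomial

/-- Any cyclic window of length `n` of variables multiplies to the product of all
variables. -/
lemma prod_window (n : ℕ) [NeZero n] (K : Type*) [Field K] (c : ZMod n) :
    ∏ j ∈ Finset.range n, X (c + (j : ZMod n)) = ∏ j : ZMod n, (X j : MvPolynomial (ZMod n) K) := by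
  refine Finset.prod_nbij' (fun j : ℕ => c + (j : ZMod n)) (fun z : ZMod n => (z - c).val)
    ?_ ?_ ?_ ?_ ?_
  · intros; simp
  · intro a _; exact Finset.mem_range.2 (ZMod.val_lt _)
  · intro a ha
    simp only [Finset.mem_range] at ha
    simp [ZMod.val_cast_of_lt ha]
  · intro z _
    simp [ZMod.natCast_val]
  · intros; rfl

/-- The product of `m*k` consecutive variables lies in `J^k`. -/
lemma prod_consec_mem (K : Type*) [Field K] (n m : ℕ) (i : ZMod n) (k : ℕ) :
    ∏ l ∈ Finset.range (m * k), X (i + (l : ZMod n)) ∈ (cyclePathIdeal K n m) ^ k := by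
  induction k with
  | zero => simp
  | succ k ih =>
      have : m * (k + 1) = m * k + m := by ring
      rw [this, Finset.prod_range_add, pow_succ]
      refine Ideal.mul_mem_mul ih ?_
      have hgen : (∏ l ∈ Finset.range m, X ((i + (m * k : ℕ)) + (l : ZMod n)) :
          MvPolynomial (ZMod n) K) ∈ cyclePathIdeal K n m := by
        apply Ideal.subset_span
        exact ⟨i + (m * k : ℕ), rfl⟩
      have heq : (∏ l ∈ Finset.range m, X (i + ((m * k + l : ℕ) : ZMod n)) :
          MvPolynomial (ZMod n) K)
          = ∏ l ∈ Finset.range m, X ((i + (m * k : ℕ)) + (l : ZMod n)) := by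
        apply Finset.prod_congr rfl
        intro l _
        push_cast
        ring_nf
      rw [heq]
      exact hgen

/-- If `gcd(n,m) = 1`, then for every variable `x_i` the monomial
`x_i ⬝ (x_1 x_2 ⋯ x_n)^α` belongs to `J_{n,m}^{t₀}`; in particular the maximal graded ideal
is contained in the colon ideal `(J_{n,m}^{t₀} : (x_1⋯x_n)^α)`. -/
theorem xi_mul_w_mem_of_gcd_eq_one
    (K : Type*) [Field K] (n m : ℕ) (hm : 2 ≤ m) (hmn : m < n)
    (hd : Nat.gcd n m = 1) (t0 α : ℕ) (hα : 0 < α) (ht0le : t0 ≤ n - 1)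
    (ht0 : m * t0 = α * n + 1)
    (ht0max : ∀ s : ℕ, s ≤ n - 1 → (∃ β : ℕ, 0 < β ∧ m * s = β * n + 1) → s ≤ t0) :
    (∀ i : ZMod n,
      X i * (∏ j ∈ Finset.range n, X ((j : ℕ) : ZMod n)) ^ α ∈ (cyclePathIdeal K n m) ^ t0) ∧
    maxIdeal K (ZMod n) ≤ ((cyclePathIdeal K n m) ^ t0).colon
      (Ideal.span {((∏ j ∈ Finset.range n, X ((j : ℕ) : ZMod n)) ^ α :
        MvPolynomial (ZMod n) K)}) := by
  haveI : NeZero n := ⟨by omega⟩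
  -- the product of all variables
  set w : MvPolynomial (ZMod n) K := ∏ j : ZMod n, X j with hw
  have hrange : (∏ j ∈ Finset.range n, X ((j : ℕ) : ZMod n) : MvPolynomial (ZMod n) K) = w := by
    have := prod_window n K (0 : ZMod n)
    simpa using this
  -- key: for every i, x_i * w^α is the product of m*t0 consecutive variables
  have key : ∀ i : ZMod n,
      X i * w ^ α = ∏ l ∈ Finset.range (m * t0), X (i + (l : ZMod n)) := by
    intro i
    rw [ht0]
    rw [Finset.prod_range_succ]
    have hblocks : ∀ b : ℕ, (∏ l ∈ Finset.range (b * n), X (i + (l : ZMod n)) :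
        MvPolynomial (ZMod n) K) = w ^ b := by
      intro b
      induction b with
      | zero => simp
      | succ b ih =>
          have : (b + 1) * n = b * n + n := by ring
          rw [this, Finset.prod_range_add, ih, pow_succ]
          congr 1
          have heq : (∏ l ∈ Finset.range n, X (i + ((b * n + l : ℕ) : ZMod n)) :
              MvPolynomial (ZMod n) K) = ∏ l ∈ Finset.range n, X (i + (l : ZMod n)) := by
            apply Finset.prod_congr rfl
            intro l _
            congr 1
            push_cast
            simp [ZMod.natCast_self]
          rw [heq, prod_window]
    rw [hblocks α]
    have : ((α * n : ℕ) : ZMod n) = 0 := by push_cast; simp [ZMod.natCast_self]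
    rw [this, add_zero, mul_comm]
  have part1 : ∀ i : ZMod n,
      X i * (∏ j ∈ Finset.range n, X ((j : ℕ) : ZMod n)) ^ α ∈ (cyclePathIdeal K n m) ^ t0 := by
    intro i
    rw [hrange, key i]
    exact prod_consec_mem K n m i t0
  refine ⟨part1, ?_⟩
  rw [maxIdeal, Ideal.span_le]
  rintro _ ⟨i, rfl⟩
  rw [SetLike.mem_coe, Ideal.mem_colon_span_singleton]
  exact part1 i
end

section
/- Let d = gcd(n,m) and t ≥ 1. Every minimal monomial generator u = x_1^{a_1} x_2^{a_2} ⋯ x_n^{a_n} of J_{n,m}^t satisfies: for each residue class j ∈ {1,…,d}, the sum of the exponents a_k over all indices k with k ≡ j (mod d) equals tm/d; in particular these d sums are all equal. -/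
open MvPolynomial

namespace CycleAux

/-- exponent vector of the `i`-th generator -/
noncomputable def eVec (n m : ℕ) (i : ZMod n) : ZMod n →₀ ℕ :=
  ∑ j ∈ Finset.range m, Finsupp.single (i + (j : ZMod n)) 1

lemma monomial_prod {K : Type*} [Field K] {σ ι : Type*} (s : Finset ι) (g : ι → (σ →₀ ℕ)) :
    ∏ j ∈ s, (monomial (g j) (1 : K)) = monomial (∑ j ∈ s, g j) 1 := by
  classical
  induction s using Finset.induction with
  | empty => simp
  | insert _ _ h ih =>
    rw [Finset.prod_insert h, Finset.sum_insert h, ih, monomial_mul, one_mul]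

lemma gen_eq {K : Type*} [Field K] (n m : ℕ) (i : ZMod n) :
    ∏ j ∈ Finset.range m, (X (i + (j : ZMod n)) : MvPolynomial (ZMod n) K)
      = monomial (eVec n m i) 1 := by
  rw [eVec, ← monomial_prod]
  exact Finset.prod_congr rfl fun _ _ => rfl

/-- exponent vectors of products of `t` generators -/
def SVec (n m t : ℕ) : Set (ZMod n →₀ ℕ) :=
  {s | ∃ f : Fin t → ZMod n, s = ∑ i, eVec n m (f i)}

lemma cyclePathIdeal_eq {K : Type*} [Field K] (n m : ℕ) :
    cyclePathIdeal K n m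
      = Ideal.span ((fun s => monomial s (1 : K)) '' Set.range (eVec n m)) := by
  unfold cyclePathIdeal
  congr 1
  ext p
  constructor
  · rintro ⟨i, rfl⟩
    exact ⟨eVec n m i, ⟨i, rfl⟩, (gen_eq n m i).symm⟩
  · rintro ⟨s, ⟨i, rfl⟩, rfl⟩
    exact ⟨i, (gen_eq n m i).symm⟩

set_option maxHeartbeats 1600000 in
lemma pow_eq {K : Type*} [Field K] (n m t : ℕ) :
    (cyclePathIdeal K n m) ^ t
      = Ideal.span ((fun s => monomial s (1 : K)) '' SVec n m t) := by
  induction t with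
  | zero =>
    have h : SVec n m 0 = {0} := by
      ext s
      simp only [SVec, Set.mem_setOf_eq, Set.mem_singleton_iff, Finset.univ_eq_empty,
        Finset.sum_empty]
      exact ⟨fun ⟨f, hf⟩ => hf, fun h => ⟨Fin.elim0, h⟩⟩
    rw [pow_zero, h, Set.image_singleton]
    simp [Ideal.one_eq_top, Ideal.span_singleton_one]
  | succ t ih =>
    rw [pow_succ, ih, cyclePathIdeal_eq, Ideal.span_mul_span']
    congr 1
    ext p
    simp only [Set.mem_mul, Set.mem_image, Set.mem_range, SVec, Set.mem_setOf_eq]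
    constructor
    · rintro ⟨q, ⟨s, ⟨f, rfl⟩, rfl⟩, r, ⟨s', ⟨i, rfl⟩, rfl⟩, rfl⟩
      refine ⟨(∑ k : Fin t, eVec n m (f k)) + eVec n m i, ⟨Fin.snoc f i, ?_⟩, ?_⟩
      · rw [Fin.sum_univ_castSucc]
        simp
      · rw [monomial_mul, one_mul]
    · rintro ⟨s, ⟨f, rfl⟩, rfl⟩
      refine ⟨monomial (∑ k : Fin t, eVec n m (f k.castSucc)) 1,
        ⟨_, ⟨fun k => f k.castSucc, rfl⟩, rfl⟩,
        monomial (eVec n m (f (Fin.last t))) 1, ⟨_, ⟨f (Fin.last t), rfl⟩, rfl⟩, ?_⟩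
      rw [monomial_mul, one_mul, Fin.sum_univ_castSucc]

lemma count_mod (d M r : ℕ) (hd : 0 < d) (hdm : d ∣ M) (hr : r < d) :
    ((Finset.range M).filter (fun x => x % d = r)).card = M / d := by
  obtain ⟨q, rfl⟩ := hdm
  have himg : (Finset.range (d * q)).filter (fun x => x % d = r)
      = (Finset.range q).image (fun i => i * d + r) := by
    ext x
    simp only [Finset.mem_filter, Finset.mem_range, Finset.mem_image]
    constructor
    · rintro ⟨h1, h2⟩
      have hdx := Nat.div_add_mod x d
      have hc : d * (x / d) = x / d * d := Nat.mul_comm _ _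
      exact ⟨x / d, Nat.div_lt_iff_lt_mul hd |>.2 (by rwa [mul_comm] at h1), by omega⟩
    · rintro ⟨i, hi, rfl⟩
      constructor
      · calc i * d + r < i * d + d := by omega
          _ = (i + 1) * d := by ring
          _ ≤ q * d := Nat.mul_le_mul_right d hi
          _ = d * q := mul_comm _ _
      · rw [Nat.add_comm, Nat.add_mul_mod_self_right, Nat.mod_eq_of_lt hr]
  rw [himg, Finset.card_image_of_injective _ (fun x y h => by
    have : x * d = y * d := by omega
    exact Nat.eq_of_mul_eq_mul_right hd this),
    Finset.card_range, Nat.mul_div_cancel_left q hd]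

lemma count_mod_shift (d M b j : ℕ) (hd : 0 < d) (hdm : d ∣ M) (hj : j < d) :
    ((Finset.range M).filter (fun x => (b + x) % d = j)).card = M / d := by
  set s := d - b % d with hs
  have hbs : (b + s) % d = 0 := by
    have h1 : b % d < d := Nat.mod_lt _ hd
    have h2 : b + s = d * (b / d) + d := by
      have := Nat.div_add_mod b d
      omega
    rw [h2, ← Nat.mul_succ, Nat.mul_mod_right]
  have hiff : ∀ x, (b + x) % d = j ↔ x % d = (j + s) % d := by
    intro x
    have h1 : (b + x + s) % d = (j + s) % d ↔ (b + x) % d = j % d :=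
      ⟨fun h => Nat.ModEq.add_right_cancel' s h, fun h => Nat.ModEq.add_right s h⟩
    have h2 : (b + x + s) % d = x % d := by
      have : b + x + s = (b + s) + x := by omega
      rw [this, Nat.add_mod, hbs, Nat.zero_add, Nat.mod_mod_of_dvd x dvd_rfl]
    rw [Nat.mod_eq_of_lt hj] at h1
    constructor
    · intro h; rw [← h2]; exact h1.2 h
    · intro h; exact h1.1 (by rw [h2]; exact h)
  have : ((Finset.range M).filter (fun x => (b + x) % d = j))
      = ((Finset.range M).filter (fun x => x % d = (j + s) % d)) := by
    apply Finset.filter_congr; intro x _; simpa using hiff x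
  rw [this, count_mod d M _ hd hdm (Nat.mod_lt _ hd)]

lemma ite_sum {α : Type*} (P : Prop) [Decidable P] (s : Finset α) (g : α → ℕ) :
    (if P then ∑ i ∈ s, g i else 0) = ∑ i ∈ s, (if P then g i else 0) := by
  split <;> simp

lemma key {n : ℕ} [NeZero n] (m d j : ℕ) (hd0 : 0 < d) (hdn : d ∣ n) (hdm : d ∣ m)
    (hj : j < d) (c : ZMod n) :
    (∑ k ∈ Finset.range n, if k % d = j then (eVec n m c) ((k : ℕ) : ZMod n) else 0)
      = m / d := by
  classical
  have heval : ∀ x : ZMod n, (eVec n m c) x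
      = ∑ j' ∈ Finset.range m, if c + (j' : ZMod n) = x then 1 else 0 := by
    intro x
    rw [eVec, Finsupp.finset_sum_apply]
    exact Finset.sum_congr rfl fun j' _ => Finsupp.single_apply
  calc (∑ k ∈ Finset.range n, if k % d = j then (eVec n m c) ((k : ℕ) : ZMod n) else 0)
      = ∑ k ∈ Finset.range n, ∑ j' ∈ Finset.range m,
          (if k % d = j then (if c + (j' : ZMod n) = ((k : ℕ) : ZMod n) then 1 else 0) else 0) := by
        refine Finset.sum_congr rfl fun k _ => ?_
        rw [heval ((k : ℕ) : ZMod n), ite_sum]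
    _ = ∑ j' ∈ Finset.range m, ∑ k ∈ Finset.range n,
          (if k % d = j then (if c + (j' : ZMod n) = ((k : ℕ) : ZMod n) then 1 else 0) else 0) :=
        Finset.sum_comm
    _ = ∑ j' ∈ Finset.range m, (if (c + (j' : ZMod n)).val % d = j then 1 else 0) := by
        refine Finset.sum_congr rfl fun j' _ => ?_
        set v := (c + (j' : ZMod n)).val with hv
        have hvn : v < n := ZMod.val_lt _
        have hstep : ∀ k ∈ Finset.range n,
            (if k % d = j then (if c + (j' : ZMod n) = ((k : ℕ) : ZMod n) then 1 else 0) else 0)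
            = (if v = k then (if k % d = j then 1 else 0) else 0) := by
          intro k hk
          have hkn : k < n := Finset.mem_range.1 hk
          have hiff : c + (j' : ZMod n) = ((k : ℕ) : ZMod n) ↔ v = k := by
            constructor
            · intro h; rw [hv, h, ZMod.val_natCast, Nat.mod_eq_of_lt hkn]
            · intro h; rw [← ZMod.natCast_zmod_val (c + (j' : ZMod n)), ← hv, h]
          by_cases h1 : k % d = j <;> by_cases h2 : v = k <;>
            simp [h1, h2, hiff]
        rw [Finset.sum_congr rfl hstep, Finset.sum_ite_eq,
          if_pos (Finset.mem_range.2 hvn)]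
    _ = ∑ j' ∈ Finset.range m, (if (c.val + j') % d = j then 1 else 0) := by
        refine Finset.sum_congr rfl fun j' _ => ?_
        have : (c + (j' : ZMod n)).val % d = (c.val + j') % d := by
          rw [ZMod.val_add, ZMod.val_natCast, Nat.mod_mod_of_dvd _ hdn, Nat.add_mod,
            Nat.mod_mod_of_dvd j' hdn, ← Nat.add_mod]
        rw [this]
    _ = ((Finset.range m).filter (fun x => (c.val + x) % d = j)).card := by
        rw [Finset.card_filter]
    _ = m / d := count_mod_shift d m c.val j hd0 hdm hj

end CycleAux

/-- Every minimal monomial generator `u = x_1^{a_1} ⋯ x_n^{a_n}` of `J_{n,m}^t` satisfies: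
for each residue class `j` modulo `d = gcd(n,m)`, the sum of the exponents `a_k` over the
indices `k ≡ j (mod d)` equals `tm/d`; in particular these `d` sums are all equal. -/
theorem minimal_generator_residue_sums
    (K : Type*) [Field K] (n m t : ℕ) (hm : 2 ≤ m) (hmn : m < n) (ht : 1 ≤ t)
    (a : ZMod n →₀ ℕ)
    (hmem : (monomial a 1 : MvPolynomial (ZMod n) K) ∈ (cyclePathIdeal K n m) ^ t)
    (hmin : ∀ b : ZMod n →₀ ℕ,
      (monomial b 1 : MvPolynomial (ZMod n) K) ∈ (cyclePathIdeal K n m) ^ t →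
      (monomial b 1 : MvPolynomial (ZMod n) K) ∣ (monomial a 1 : MvPolynomial (ZMod n) K) →
      (b.sum fun _ e => e) < (a.sum fun _ e => e) → False) :
    ∀ j < Nat.gcd n m,
      (∑ k ∈ Finset.range n, if k % Nat.gcd n m = j then a ((k : ℕ) : ZMod n) else 0)
        = t * m / Nat.gcd n m := by
  classical
  haveI : NeZero n := ⟨by omega⟩
  set d := Nat.gcd n m with hdd
  have hd0 : 0 < d := Nat.gcd_pos_of_pos_right _ (by omega)
  have hdn : d ∣ n := Nat.gcd_dvd_left n m
  have hdm : d ∣ m := Nat.gcd_dvd_right n m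
  rw [CycleAux.pow_eq, mem_ideal_span_monomial_image] at hmem
  have hsup : (monomial a (1 : K)).support = {a} := by
    rw [support_monomial, if_neg one_ne_zero]
  obtain ⟨s, hsSt, hsa⟩ := hmem a (by rw [hsup]; exact Finset.mem_singleton_self a)
  have hsmem : (monomial s 1 : MvPolynomial (ZMod n) K) ∈ (cyclePathIdeal K n m) ^ t := by
    rw [CycleAux.pow_eq]; exact Ideal.subset_span ⟨s, hsSt, rfl⟩
  have hdvd : (monomial s 1 : MvPolynomial (ZMod n) K) ∣ monomial a 1 :=
    ⟨monomial (a - s) 1, by rw [monomial_mul, one_mul, add_tsub_cancel_of_le hsa]⟩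
  have hsum : (a.sum fun _ e => e) = (s.sum fun _ e => e) + ((a - s).sum fun _ e => e) := by
    conv_lhs => rw [← add_tsub_cancel_of_le hsa]
    exact Finsupp.sum_add_index' (fun _ => rfl) (fun _ _ _ => rfl)
  have hnotlt : ¬ ((s.sum fun _ e => e) < (a.sum fun _ e => e)) := hmin s hsmem hdvd
  have h0 : ((a - s).sum fun _ e => e) = 0 := by omega
  have hzero : a - s = 0 := by
    ext x
    simp only [Finsupp.coe_zero, Pi.zero_apply]
    by_contra hx
    have hxs : x ∈ (a - s).support := Finsupp.mem_support_iff.2 hx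
    have hle : (a - s) x ≤ ((a - s).sum fun _ e => e) :=
      Finset.single_le_sum (fun i _ => Nat.zero_le _) hxs
    omega
  have has : a = s := le_antisymm (tsub_eq_zero_iff_le.mp hzero) hsa
  obtain ⟨f, hf⟩ := hsSt
  rw [has, hf]
  intro j hj
  have happ : ∀ x : ZMod n, (∑ i, CycleAux.eVec n m (f i)) x
      = ∑ i, (CycleAux.eVec n m (f i)) x := fun x => Finsupp.finset_sum_apply _ _ _
  calc (∑ k ∈ Finset.range n, if k % d = j then (∑ i, CycleAux.eVec n m (f i)) ((k:ℕ):ZMod n) else 0)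
      = ∑ k ∈ Finset.range n, ∑ i : Fin t,
          (if k % d = j then (CycleAux.eVec n m (f i)) ((k:ℕ):ZMod n) else 0) := by
        refine Finset.sum_congr rfl fun k _ => ?_
        rw [happ ((k : ℕ) : ZMod n), CycleAux.ite_sum]
    _ = ∑ i : Fin t, ∑ k ∈ Finset.range n,
          (if k % d = j then (CycleAux.eVec n m (f i)) ((k:ℕ):ZMod n) else 0) :=
        Finset.sum_comm
    _ = ∑ _i : Fin t, m / d := by
        refine Finset.sum_congr rfl fun i _ => ?_
        exact CycleAux.key m d j hd0 hdn hdm hj (f i)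
    _ = t * (m / d) := by simp [Finset.sum_const, mul_comm]
    _ = t * m / d := (Nat.mul_div_assoc t hdm).symm
end
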